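/- Let X₁, X₂ and Z be mutually independent real random variables, where X₁ is exponentially distributed with mean λ₁ > 0, X₂ is exponentially distributed with mean λ₂ > 0, and Z is nonnegative. Let A, B, η, ρ, u > 0. Then ℙ( A·ρ·X₂ ≥ u·(B·ρ·X₁ + η·ρ·Z + 1) ) = ( A·λ₂/(A·λ₂ + B·u·λ₁) ) · exp( −u/(A·λ₂·ρ) ) · 𝔼[ exp( −η·u·Z/(A·λ₂) ) ]. -/

import Mathlib

open MeasureTheory ProbabilityTheory Real Set

noncomputable def expM (lam : ℝ) : Measure ℝ := ProbabilityTheory.expMeasure (1/lam)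

lemma expM_eq (lam : ℝ) :
    MeasureTheory.volume.withDensity
      (fun x => ENNReal.ofReal (if 0 ≤ x then (1 / lam) * Real.exp (-x / lam) else 0))
      = expM lam := by
  have h : (fun x => ENNReal.ofReal (if 0 ≤ x then (1 / lam) * Real.exp (-x / lam) else 0))
      = exponentialPDF (1/lam) := by
    funext x
    rw [exponentialPDF_eq]
    congr 1
    split_ifs with h
    · rw [show -x / lam = -(1/lam * x) by ring]
    · rfl
  rw [h, expM, expMeasure, gammaMeasure]
  rfl

lemma expM_density : ∀ lam : ℝ, expM lam = MeasureTheory.volume.withDensity (exponentialPDF (1/lam)) := by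
  intro lam; rw [← expM_eq]; congr 1; funext x
  rw [exponentialPDF_eq]; congr 1; split_ifs with h
  · rw [show -x / lam = -(1/lam * x) by ring]
  · rfl

lemma expM_neg (lam : ℝ) : expM lam {x : ℝ | x < 0} = 0 := by
  rw [expM_density, show {x : ℝ | x < 0} = Iio 0 from rfl,
    withDensity_apply _ measurableSet_Iio]
  rw [setLIntegral_congr_fun (measurableSet_Iio (a := (0:ℝ)))
    (fun a (ha : a < 0) => exponentialPDF_of_neg ha)]
  simp

lemma expM_tail {lam t : ℝ} (hlam : 0 < lam) (ht : 0 ≤ t) :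
    expM lam (Ici t) = ENNReal.ofReal (Real.exp (-(t/lam))) := by
  have hr : 0 < 1/lam := by positivity
  haveI : IsProbabilityMeasure (expM lam) := isProbabilityMeasure_expMeasure hr
  have hsingleton : expM lam {t} = 0 := by
    rw [expM_density, withDensity_apply _ (measurableSet_singleton t)]
    rw [Measure.restrict_eq_zero.mpr (by simp), lintegral_zero_measure]
  have hIic : expM lam (Iic t) = ENNReal.ofReal (1 - Real.exp (-(t/lam))) := by
    rw [expM_density, withDensity_apply _ measurableSet_Iic,
      lintegral_exponentialPDF_eq_antiDeriv hr t, if_pos ht, show 1/lam * t = t/lam by ring]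
  have hIio : expM lam (Iio t) = ENNReal.ofReal (1 - Real.exp (-(t/lam))) := by
    rw [← Set.Iic_diff_right, measure_diff_null hsingleton, hIic]
  have he1 : Real.exp (-(t/lam)) ≤ 1 := by
    rw [Real.exp_le_one_iff]
    have : 0 ≤ t / lam := by positivity
    linarith
  rw [show Ici t = (Iio t)ᶜ by simp, measure_compl measurableSet_Iio (measure_ne_top _ _),
    hIio, measure_univ, ← ENNReal.ofReal_one,
    ← ENNReal.ofReal_sub _ (by linarith)]
  congr 1
  ring

lemma expM_laplace {lam c : ℝ} (hlam : 0 < lam) (hc : 0 < c) :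
    ∫⁻ x, ENNReal.ofReal (Real.exp (-(c*x))) ∂(expM lam)
      = ENNReal.ofReal (1/(1+c*lam)) := by
  have hr : 0 < 1/lam := by positivity
  have hr' : 0 < 1/lam + c := by positivity
  have hm : Measurable (exponentialPDF (1/lam)) :=
    (measurable_exponentialPDFReal (1/lam)).ennreal_ofReal
  rw [expM_density, lintegral_withDensity_eq_lintegral_mul _ hm (show Measurable fun x : ℝ => ENNReal.ofReal (Real.exp (-(c*x))) by fun_prop)]
  have key : ∀ x : ℝ, (exponentialPDF (1/lam) * fun x => ENNReal.ofReal (Real.exp (-(c*x)))) x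
      = ENNReal.ofReal ((1/lam)/(1/lam+c)) * exponentialPDF (1/lam + c) x := by
    intro x
    simp only [Pi.mul_apply, exponentialPDF_eq]
    split_ifs with h
    · rw [← ENNReal.ofReal_mul (by positivity), ← ENNReal.ofReal_mul (by positivity)]
      congr 1
      rw [mul_assoc, ← Real.exp_add, show -(1/lam * x) + -(c*x) = -((1/lam+c)*x) by ring]
      field_simp
    · simp
  rw [lintegral_congr key,
    lintegral_const_mul _
      (show Measurable (exponentialPDF (1/lam + c)) from
        (measurable_exponentialPDFReal (1/lam + c)).ennreal_ofReal),
    lintegral_exponentialPDF_eq_one hr', mul_one]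
  congr 1
  rw [div_eq_div_iff (by positivity) (by positivity)]
  field_simp
/-- A real random variable `X` is exponentially distributed with mean `lam > 0` if its law has
density `(1/lam) * exp (-x/lam)` on `[0, ∞)` and `0` on `(-∞, 0)`. -/
def HasExpLaw {Ω : Type*} [MeasurableSpace Ω] (P : Measure Ω) (X : Ω → ℝ) (lam : ℝ) : Prop :=
  Measurable X ∧
    P.map X = MeasureTheory.volume.withDensity
      (fun x => ENNReal.ofReal (if 0 ≤ x then (1 / lam) * Real.exp (-x / lam) else 0))

theorem stmt_4 {Ω : Type*} [MeasurableSpace Ω] (P : Measure Ω) [IsProbabilityMeasure P]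
    (lam₁ lam₂ A B η ρ u : ℝ) (hlam₁ : 0 < lam₁) (hlam₂ : 0 < lam₂)
    (hA : 0 < A) (hB : 0 < B) (hη : 0 < η) (hρ : 0 < ρ) (hu : 0 < u)
    (X₁ X₂ Z : Ω → ℝ)
    (hX₁ : HasExpLaw P X₁ lam₁) (hX₂ : HasExpLaw P X₂ lam₂)
    (hZmeas : Measurable Z) (hZnonneg : ∀ ω, 0 ≤ Z ω)
    (hindep : iIndepFun ![X₁, X₂, Z] P) :
    (P {ω | A * ρ * X₂ ω ≥ u * (B * ρ * X₁ ω + η * ρ * Z ω + 1)}).toReal =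
      (A * lam₂ / (A * lam₂ + B * u * lam₁)) * Real.exp (-u / (A * lam₂ * ρ)) *
        ∫ ω, Real.exp (-(η * u * Z ω) / (A * lam₂)) ∂P := by
  obtain ⟨hm₁, hmap₁⟩ := hX₁
  obtain ⟨hm₂, hmap₂⟩ := hX₂
  rw [expM_eq] at hmap₁ hmap₂
  have hr₂ : 0 < 1/lam₂ := by positivity
  haveI : IsProbabilityMeasure (expM lam₂) := isProbabilityMeasure_expMeasure hr₂
  set ν := P.map Z with hν
  haveI : IsProbabilityMeasure ν := Measure.isProbabilityMeasure_map hZmeas.aemeasurable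
  have hνneg : ν {z : ℝ | z < 0} = 0 := by
    rw [hν, Measure.map_apply hZmeas (by exact measurableSet_Iio)]
    have : Z ⁻¹' {z : ℝ | z < 0} = ∅ := by
      ext ω; simp [not_lt.mpr (hZnonneg ω)]
    rw [this]; simp
  -- independence
  have hW : Measurable fun ω => (X₁ ω, Z ω) := hm₁.prodMk hZmeas
  have hmeasvec : ∀ i, Measurable (![X₁, X₂, Z] i) := by
    intro i; fin_cases i
    · exact hm₁
    · exact hm₂
    · exact hZmeas
  have hWX₂ : IndepFun (fun ω => (X₁ ω, Z ω)) X₂ P := by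
    have := hindep.indepFun_prodMk hmeasvec 0 2 1 (by decide) (by decide)
    simpa using this
  have hX₁Z : IndepFun X₁ Z P := by
    have := hindep.indepFun (show (0:Fin 3) ≠ 2 by decide)
    simpa using this
  have hmapW : P.map (fun ω => (X₁ ω, Z ω)) = (expM lam₁).prod ν := by
    rw [(indepFun_iff_map_prod_eq_prod_map_map hm₁.aemeasurable hZmeas.aemeasurable).mp hX₁Z,
      hmap₁]
  have hmapPair : P.map (fun ω => ((X₁ ω, Z ω), X₂ ω)) = ((expM lam₁).prod ν).prod (expM lam₂) := by
    rw [(indepFun_iff_map_prod_eq_prod_map_map hW.aemeasurable hm₂.aemeasurable).mp hWX₂,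
      hmapW, hmap₂]
  -- the event as a preimage
  set S : Set ((ℝ × ℝ) × ℝ) := {p | u * (B * ρ * p.1.1 + η * ρ * p.1.2 + 1) ≤ A * ρ * p.2}
    with hSdef
  have hS : MeasurableSet S := by
    apply measurableSet_le <;> fun_prop
  have hev : P {ω | A * ρ * X₂ ω ≥ u * (B * ρ * X₁ ω + η * ρ * Z ω + 1)}
      = (((expM lam₁).prod ν).prod (expM lam₂)) S := by
    rw [← hmapPair, Measure.map_apply (hW.prodMk hm₂) hS]
    rfl
  rw [hev, Measure.prod_apply hS]
  -- a.e. nonnegativity on the first factor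
  have hae : ∀ᵐ w ∂((expM lam₁).prod ν), 0 ≤ w.1 ∧ 0 ≤ w.2 := by
    have h1 : ((expM lam₁).prod ν) {w : ℝ × ℝ | w.1 < 0} = 0 := by
      have : {w : ℝ × ℝ | w.1 < 0} = {x : ℝ | x < 0} ×ˢ (Set.univ : Set ℝ) := by
        ext w; simp
      rw [this, Measure.prod_prod, expM_neg]
      simp
    have h2 : ((expM lam₁).prod ν) {w : ℝ × ℝ | w.2 < 0} = 0 := by
      have : {w : ℝ × ℝ | w.2 < 0} = (Set.univ : Set ℝ) ×ˢ {z : ℝ | z < 0} := by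
        ext w; simp
      rw [this, Measure.prod_prod, hνneg]
      simp
    rw [ae_iff]
    apply measure_mono_null _ (measure_union_null h1 h2)
    intro w hw
    simp only [Set.mem_setOf_eq, not_and_or, not_le] at hw
    simpa [Set.mem_union] using hw
  have hker : ∀ᵐ w ∂((expM lam₁).prod ν),
      expM lam₂ (Prod.mk w ⁻¹' S)
      = ENNReal.ofReal (Real.exp (-u/(A*lam₂*ρ))) *
        (ENNReal.ofReal (Real.exp (-(B*u/(A*lam₂)*w.1))) *
         ENNReal.ofReal (Real.exp (-(η*u/(A*lam₂)*w.2)))) := by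
    filter_upwards [hae] with w hw
    obtain ⟨hw1, hw2⟩ := hw
    have hinner : (0:ℝ) ≤ B * ρ * w.1 + η * ρ * w.2 + 1 := by
      have h1 : (0:ℝ) ≤ B * ρ * w.1 := mul_nonneg (by positivity) hw1
      have h2 : (0:ℝ) ≤ η * ρ * w.2 := mul_nonneg (by positivity) hw2
      linarith
    have hpre : Prod.mk w ⁻¹' S = Set.Ici (u*(B*ρ*w.1+η*ρ*w.2+1)/(A*ρ)) := by
      ext y
      simp only [hSdef, Set.mem_preimage, Set.mem_setOf_eq, Set.mem_Ici]
      rw [div_le_iff₀ (by positivity : (0:ℝ) < A*ρ)]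
      constructor <;> intro h <;> linarith
    rw [hpre, expM_tail hlam₂ (by positivity)]
    rw [show -(u*(B*ρ*w.1+η*ρ*w.2+1)/(A*ρ)/lam₂)
        = -u/(A*lam₂*ρ) + (-(B*u/(A*lam₂)*w.1) + -(η*u/(A*lam₂)*w.2)) by
      field_simp
      ring]
    rw [Real.exp_add, Real.exp_add,
      ENNReal.ofReal_mul (by positivity), ENNReal.ofReal_mul (by positivity)]
  have hmf : Measurable fun x : ℝ => ENNReal.ofReal (Real.exp (-(B*u/(A*lam₂)*x))) :=
    ((measurable_const.mul measurable_id').neg.exp).ennreal_ofReal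
  have hmg : Measurable fun x : ℝ => ENNReal.ofReal (Real.exp (-(η*u/(A*lam₂)*x))) :=
    ((measurable_const.mul measurable_id').neg.exp).ennreal_ofReal
  rw [lintegral_congr_ae hker,
    lintegral_const_mul _
      (show Measurable fun a : ℝ × ℝ =>
          ENNReal.ofReal (Real.exp (-(B*u/(A*lam₂)*a.1)))
            * ENNReal.ofReal (Real.exp (-(η*u/(A*lam₂)*a.2))) from
        (hmf.comp measurable_fst).mul (hmg.comp measurable_snd)),
    lintegral_prod_mul hmf.aemeasurable hmg.aemeasurable]
  have hL1 : ∫⁻ x, ENNReal.ofReal (Real.exp (-(B*u/(A*lam₂)*x))) ∂(expM lam₁)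
      = ENNReal.ofReal (1/(1+(B*u/(A*lam₂))*lam₁)) := expM_laplace hlam₁ (by positivity)
  have hνnonneg : ∀ᵐ z ∂ν, (0:ℝ) ≤ z := by
    rw [ae_iff]
    simpa [not_le] using hνneg
  have hint : Integrable (fun z : ℝ => Real.exp (-(η*u/(A*lam₂)*z))) ν := by
    apply (integrable_const (1:ℝ)).mono'
      (show Measurable fun z : ℝ => Real.exp (-(η*u/(A*lam₂)*z)) by fun_prop).aestronglyMeasurable
    filter_upwards [hνnonneg] with z hz
    rw [Real.norm_eq_abs, abs_of_nonneg (Real.exp_nonneg _), Real.exp_le_one_iff]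
    have : (0:ℝ) ≤ η*u/(A*lam₂)*z := mul_nonneg (by positivity) hz
    linarith
  have hL2 : ∫⁻ z, ENNReal.ofReal (Real.exp (-(η*u/(A*lam₂)*z))) ∂ν
      = ENNReal.ofReal (∫ z, Real.exp (-(η*u/(A*lam₂)*z)) ∂ν) :=
    (ofReal_integral_eq_lintegral_ofReal hint
      (ae_of_all _ fun z => Real.exp_nonneg _)).symm
  have hI : ∫ z, Real.exp (-(η*u/(A*lam₂)*z)) ∂ν
      = ∫ ω, Real.exp (-(η * u * Z ω) / (A * lam₂)) ∂P := by
    rw [hν, integral_map hZmeas.aemeasurable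
      (show Measurable fun z : ℝ => Real.exp (-(η*u/(A*lam₂)*z)) by fun_prop).aestronglyMeasurable]
    congr 1
    funext ω
    congr 1
    ring
  have hInn : (0:ℝ) ≤ ∫ z, Real.exp (-(η*u/(A*lam₂)*z)) ∂ν :=
    integral_nonneg fun z => Real.exp_nonneg _
  rw [hL1, hL2, ENNReal.toReal_mul, ENNReal.toReal_mul,
    ENNReal.toReal_ofReal (Real.exp_nonneg _),
    ENNReal.toReal_ofReal (by positivity),
    ENNReal.toReal_ofReal hInn, hI]
  rw [show (1:ℝ)+(B*u/(A*lam₂))*lam₁ = (A*lam₂+B*u*lam₁)/(A*lam₂) by field_simp,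
    one_div_div]
  ring
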